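/- Fix bits i₁, i₂, i₃, i₄, y ∈ ZMod 2 and let w = i₁ + i₂ + i₃ + i₄ and r = i₃ + i₄. Let φ be the four-qubit state obtained from the computational basis state e_{i₁} ⊗ e_{i₂} ⊗ e_{i₃} ⊗ e_{i₄} by applying, in order: Hadamard gates on qubits 1 and 2; CNOT₁₃; CNOT₂₄; and, exactly when y = 0, CNOT₁₂. Let φ' = (H ⊗ H ⊗ H ⊗ H) φ. Then every computational basis index (u₁, u₂, u₃, u₄) at which φ' has a nonzero amplitude satisfies (u₁ + u₃ + u₄) + w + r = u₂ * y. That is, in case s = 1 of Protocol 2, where Alice measures all four qubits in the X basis, her input bit x = u₂, her output bit g + w = u₁ + u₃ + u₄ + w, and Bob's output bit r always satisfy (g + w) + r = x · y. -/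

import Mathlib

open Matrix Kronecker

noncomputable section

/-- Four-qubit index type (bits of the four qubits). -/
abbrev Q4 : Type := ZMod 2 × ZMod 2 × ZMod 2 × ZMod 2

/-- The four-qubit computational basis state `e_{i₁} ⊗ e_{i₂} ⊗ e_{i₃} ⊗ e_{i₄}`. -/
def basis4 (i₁ i₂ i₃ i₄ : ZMod 2) : Q4 → ℂ :=
  fun v => if v = (i₁, i₂, i₃, i₄) then 1 else 0

/-- The Hadamard gate. -/
def Hg : Matrix (ZMod 2) (ZMod 2) ℂ := (Real.sqrt 2 : ℂ)⁻¹ • !![1, 1; 1, -1]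

/-- Hadamard gates on qubits 1 and 2 (identity on qubits 3 and 4). -/
def H12 : Matrix Q4 Q4 ℂ :=
  Hg ⊗ₖ (Hg ⊗ₖ ((1 : Matrix (ZMod 2) (ZMod 2) ℂ) ⊗ₖ (1 : Matrix (ZMod 2) (ZMod 2) ℂ)))

/-- CNOT with qubit 1 controlling qubit 3. -/
def CNOT13 : Matrix Q4 Q4 ℂ :=
  Matrix.of fun v w => if v = (w.1, w.2.1, w.1 + w.2.2.1, w.2.2.2) then 1 else 0

/-- CNOT with qubit 2 controlling qubit 4. -/
def CNOT24 : Matrix Q4 Q4 ℂ :=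
  Matrix.of fun v w => if v = (w.1, w.2.1, w.2.2.1, w.2.1 + w.2.2.2) then 1 else 0

/-- CNOT with qubit 1 controlling qubit 2. -/
def CNOT12 : Matrix Q4 Q4 ℂ :=
  Matrix.of fun v w => if v = (w.1, w.1 + w.2.1, w.2.2.1, w.2.2.2) then 1 else 0

/-- The state Bob prepares in Protocol 2: starting from `e_{i₁}⊗e_{i₂}⊗e_{i₃}⊗e_{i₄}`,
apply Hadamards on qubits 1, 2, then `CNOT₁₃`, `CNOT₂₄`, and `CNOT₁₂` exactly when `y = 0`. -/
def bobState (i₁ i₂ i₃ i₄ y : ZMod 2) : Q4 → ℂ :=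
  ((CNOT12 ^ (1 - y).val) * CNOT24 * CNOT13 * H12).mulVec (basis4 i₁ i₂ i₃ i₄)

/-- Hadamard gates on all four qubits (X-basis measurement of every qubit). -/
def H1234 : Matrix Q4 Q4 ℂ := Hg ⊗ₖ (Hg ⊗ₖ (Hg ⊗ₖ Hg))


lemma delta_mulVec (f : Q4 → Q4) (hf : ∀ v, f (f v) = v) (x : Q4 → ℂ) (v : Q4) :
    (Matrix.of fun a b => if a = f b then (1:ℂ) else 0).mulVec x v = x (f v) := by
  have h : ∀ w, (v = f w) ↔ (f v = w) :=
    fun w => ⟨fun h => by rw [h, hf], fun h => by rw [← h, hf]⟩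
  simp only [Matrix.mulVec, dotProduct, Matrix.of_apply, h, ite_mul, one_mul, zero_mul]
  rw [Finset.sum_ite_eq]
  simp

lemma CNOT13_mulVec (x : Q4 → ℂ) (v : Q4) :
    CNOT13.mulVec x v = x (v.1, v.2.1, v.1 + v.2.2.1, v.2.2.2) :=
  delta_mulVec (fun w => (w.1, w.2.1, w.1 + w.2.2.1, w.2.2.2)) (by decide) x v
lemma CNOT24_mulVec (x : Q4 → ℂ) (v : Q4) :
    CNOT24.mulVec x v = x (v.1, v.2.1, v.2.2.1, v.2.1 + v.2.2.2) :=
  delta_mulVec (fun w => (w.1, w.2.1, w.2.2.1, w.2.1 + w.2.2.2)) (by decide) x v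
lemma CNOT12_mulVec (x : Q4 → ℂ) (v : Q4) :
    CNOT12.mulVec x v = x (v.1, v.1 + v.2.1, v.2.2.1, v.2.2.2) :=
  delta_mulVec (fun w => (w.1, w.1 + w.2.1, w.2.2.1, w.2.2.2)) (by decide) x v

lemma H12_basis (i₁ i₂ i₃ i₄ : ZMod 2) (v : Q4) :
    H12.mulVec (basis4 i₁ i₂ i₃ i₄) v
      = Hg v.1 i₁ * Hg v.2.1 i₂ * ((if v.2.2.1 = i₃ then 1 else 0) * (if v.2.2.2 = i₄ then 1 else 0)) := by
  simp only [H12, Matrix.mulVec, dotProduct, basis4, Matrix.kroneckerMap_apply,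
    Matrix.one_apply, mul_ite, mul_one, mul_zero]
  rw [Finset.sum_ite_eq']
  simp

lemma bobState_one (i₁ i₂ i₃ i₄ : ZMod 2) (v : Q4) :
    bobState i₁ i₂ i₃ i₄ 1 v
      = Hg v.1 i₁ * Hg v.2.1 i₂ *
        ((if v.1 + v.2.2.1 = i₃ then 1 else 0) * (if v.2.1 + v.2.2.2 = i₄ then 1 else 0)) := by
  have : bobState i₁ i₂ i₃ i₄ 1
      = CNOT24.mulVec (CNOT13.mulVec (H12.mulVec (basis4 i₁ i₂ i₃ i₄))) := by
    unfold bobState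
    norm_num [Matrix.mulVec_mulVec, Matrix.mul_assoc]
  rw [this, CNOT24_mulVec, CNOT13_mulVec, H12_basis]

lemma bobState_zero (i₁ i₂ i₃ i₄ : ZMod 2) (v : Q4) :
    bobState i₁ i₂ i₃ i₄ 0 v
      = Hg v.1 i₁ * Hg (v.1 + v.2.1) i₂ *
        ((if v.1 + v.2.2.1 = i₃ then 1 else 0) * (if v.1 + v.2.1 + v.2.2.2 = i₄ then 1 else 0)) := by
  have : bobState i₁ i₂ i₃ i₄ 0
      = CNOT12.mulVec (CNOT24.mulVec (CNOT13.mulVec (H12.mulVec (basis4 i₁ i₂ i₃ i₄)))) := by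
    unfold bobState
    norm_num [Matrix.mulVec_mulVec, Matrix.mul_assoc, ZMod.val_one]
  rw [this, CNOT12_mulVec, CNOT24_mulVec, CNOT13_mulVec, H12_basis]

lemma z2cases : ∀ z : ZMod 2, z = 0 ∨ z = 1 := by decide

lemma sum_z2 (f : ZMod 2 → ℂ) : ∑ a, f a = f 0 + f 1 := by
  rw [show (Finset.univ : Finset (ZMod 2)) = {0,1} from by decide]
  rw [Finset.sum_insert (by decide), Finset.sum_singleton]

noncomputable def χ (a : ZMod 2) : ℂ := if a = 0 then 1 else -1

lemma χ_zero : χ 0 = 1 := rfl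
lemma χ_add (a b : ZMod 2) : χ (a + b) = χ a * χ b := by
  rcases z2cases a with rfl|rfl <;> rcases z2cases b with rfl|rfl <;>
    norm_num [χ, show ((1:ZMod 2)+1) = 0 from rfl, show ((2:ZMod 2) = 0) = True from by decide,
      show ((1:ZMod 2) = 0) = False from by decide]
lemma χ_sq (a : ZMod 2) : χ a ^ 2 = 1 := by
  rcases z2cases a with rfl|rfl <;>
    norm_num [χ, show ((1:ZMod 2) = 0) = False from by decide]
lemma χ_cube (a : ZMod 2) : χ a ^ 3 = χ a := by
  rcases z2cases a with rfl|rfl <;>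
    norm_num [χ, show ((1:ZMod 2) = 0) = False from by decide]
lemma Hg_eq (a b : ZMod 2) : Hg a b = (Real.sqrt 2 : ℂ)⁻¹ * χ (a * b) := by
  rcases z2cases a with rfl|rfl <;> rcases z2cases b with rfl|rfl <;>
    norm_num [Hg, χ, show ((1:ZMod 2) = 0) = False from by decide] <;> erw [Matrix.smul_apply] <;> simp <;>
    [rfl; rfl; rfl; exact (congrArg _ (show !![(1:ℂ), 1; 1, -1] (1:ZMod 2) (1:ZMod 2) = -1 from rfl)).trans (mul_neg_one _)]

def e0 : Q4 ≃ Q4 :=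
  ⟨fun v => (v.1, v.2.1, v.1 + v.2.2.1, v.1 + v.2.1 + v.2.2.2),
   fun v => (v.1, v.2.1, v.1 + v.2.2.1, v.1 + v.2.1 + v.2.2.2), by decide, by decide⟩
def e1 : Q4 ≃ Q4 :=
  ⟨fun v => (v.1, v.2.1, v.1 + v.2.2.1, v.2.1 + v.2.2.2),
   fun v => (v.1, v.2.1, v.1 + v.2.2.1, v.2.1 + v.2.2.2), by decide, by decide⟩

lemma addK : ∀ x y : ZMod 2, x + (x + y) = y := by decide

lemma amp0 (i₁ i₂ i₃ i₄ a b c d : ZMod 2) :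
    (H1234.mulVec (bobState i₁ i₂ i₃ i₄ 0)) (a, b, c, d)
      = ((Real.sqrt 2 : ℂ)⁻¹)^6 * (χ (c * i₃) * χ (d * i₄)) *
        ((1 + χ (a + c + d + i₁ + i₂)) * (1 + χ (b + d + i₂))) := by
  simp only [Matrix.mulVec, dotProduct, H1234, Matrix.kroneckerMap_apply, bobState_zero]
  rw [← Equiv.sum_comp e0]
  simp only [e0, Equiv.coe_fn_mk, addK]
  simp only [Fintype.sum_prod_type, sum_z2]
  rcases z2cases i₃ with rfl|rfl <;> rcases z2cases i₄ with rfl|rfl <;>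
    simp only [show ((1:ZMod 2)+1) = 0 from rfl, zero_add, add_zero,
      show ((0:ZMod 2) = 0) = True from by decide, show ((1:ZMod 2) = 0) = False from by decide,
      show ((0:ZMod 2) = 1) = False from by decide, show ((1:ZMod 2) = 1) = True from by decide,
      if_true, if_false, mul_one, mul_zero, zero_mul, one_mul,
      Hg_eq, χ_add, χ_zero] <;>
    ring_nf <;>
    simp only [χ_sq, χ_cube, one_mul, mul_one] <;>
    try ring_nf

lemma amp1 (i₁ i₂ i₃ i₄ a b c d : ZMod 2) :
    (H1234.mulVec (bobState i₁ i₂ i₃ i₄ 1)) (a, b, c, d)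
      = ((Real.sqrt 2 : ℂ)⁻¹)^6 * (χ (c * i₃) * χ (d * i₄)) *
        ((1 + χ (a + c + i₁)) * (1 + χ (b + d + i₂))) := by
  simp only [Matrix.mulVec, dotProduct, H1234, Matrix.kroneckerMap_apply, bobState_one]
  rw [← Equiv.sum_comp e1]
  simp only [e1, Equiv.coe_fn_mk, addK]
  simp only [Fintype.sum_prod_type, sum_z2]
  rcases z2cases i₃ with rfl|rfl <;> rcases z2cases i₄ with rfl|rfl <;>
    simp only [show ((1:ZMod 2)+1) = 0 from rfl, zero_add, add_zero,
      show ((0:ZMod 2) = 0) = True from by decide, show ((1:ZMod 2) = 0) = False from by decide,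
      show ((0:ZMod 2) = 1) = False from by decide, show ((1:ZMod 2) = 1) = True from by decide,
      if_true, if_false, mul_one, mul_zero, zero_mul, one_mul,
      Hg_eq, χ_add, χ_zero] <;>
    ring_nf <;>
    simp only [χ_sq, χ_cube, one_mul, mul_one] <;>
    try ring_nf

lemma one_add_χ_ne (x : ZMod 2) (h : (1 + χ x) ≠ 0) : x = 0 := by
  rcases z2cases x with rfl|rfl
  · rfl
  · exfalso; apply h
    norm_num [χ, show ((1:ZMod 2) = 0) = False from by decide]


/-- Correctness of Protocol 2 in case `s = 1` (X-basis measurement): every basis index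
`(u₁,u₂,u₃,u₄)` with nonzero amplitude in `(H⊗H⊗H⊗H) φ` satisfies
`(u₁+u₃+u₄) + w + r = u₂·y`, where `w = i₁+i₂+i₃+i₄` and `r = i₃+i₄`. -/
theorem protocol2_correct_s1 (i₁ i₂ i₃ i₄ y : ZMod 2) :
    ∀ u : Q4, (H1234.mulVec (bobState i₁ i₂ i₃ i₄ y)) u ≠ 0 →
      (u.1 + u.2.2.1 + u.2.2.2) + (i₁ + i₂ + i₃ + i₄) + (i₃ + i₄) = u.2.1 * y := by
  rintro ⟨a, b, c, d⟩ hu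
  rcases z2cases y with rfl|rfl
  · rw [amp0] at hu
    have hp : a + c + d + i₁ + i₂ = 0 := by
      apply one_add_χ_ne
      intro h
      exact hu (by rw [h]; ring)
    clear hu
    revert hp
    revert a b c d i₁ i₂ i₃ i₄
    decide
  · rw [amp1] at hu
    have hp : a + c + i₁ = 0 := by
      apply one_add_χ_ne
      intro h
      exact hu (by rw [h]; ring)
    have hq : b + d + i₂ = 0 := by
      apply one_add_χ_ne
      intro h
      exact hu (by rw [h]; ring)
    clear hu
    revert hp hq
    revert a b c d i₁ i₂ i₃ i₄
    decide
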